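/- Let n, p be positive integers, A a real n×n matrix, B₁, B₂ real n×p matrices, and 0 < h < T reals. Set B = B₁ + exp(−h·A)·B₂, G_T = ∫_0^{T−h} exp((T−t)A)·B·Bᵀ·exp((T−t)Aᵀ) dt + ∫_{T−h}^{T} exp((T−t)A)·B₁·B₁ᵀ·exp((T−t)Aᵀ) dt, and define the control operator L u = ∫_0^{T−h} exp((T−t)A)·B·u(t) dt + ∫_{T−h}^{T} exp((T−t)A)·B₁·u(t) dt for u : ℝ → ℝᵖ. Then the following are equivalent: (i) for every y ∈ ℝⁿ there exists a measurable u : ℝ → ℝᵖ with ∫_0^T ‖u(t)‖² dt < ∞ and L u = y; (ii) G_T is positive definite. -/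

import Mathlib

open Matrix MeasureTheory intervalIntegral

attribute [local instance] Matrix.linftyOpNormedAddCommGroup Matrix.linftyOpNormedSpace

section Helpers

/-- Dot product commutes with interval integrals of integrable functions. -/
lemma dot_intervalIntegral {m : ℕ} (x : Fin m → ℝ) {f : ℝ → Fin m → ℝ} {a b : ℝ}
    (hf : IntervalIntegrable f volume a b) :
    x ⬝ᵥ (∫ t in a..b, f t) = ∫ t in a..b, x ⬝ᵥ f t := by
  let l : (Fin m → ℝ) →ₗ[ℝ] ℝ :=
    { toFun := fun v => x ⬝ᵥ v
      map_add' := fun v w => dotProduct_add x v w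
      map_smul' := fun c v => by simp [dotProduct_smul] }
  have := (LinearMap.toContinuousLinearMap l).intervalIntegral_comp_comm hf
  simpa [l] using this.symm

/-- Matrix-vector multiplication commutes with interval integrals of integrable
matrix-valued functions. -/
lemma mulVec_intervalIntegral {n q : ℕ} (z : Fin q → ℝ)
    {M : ℝ → Matrix (Fin n) (Fin q) ℝ} {a b : ℝ}
    (hM : @IntervalIntegrable _ PseudoMetricSpace.toUniformSpace.toTopologicalSpace _ M volume a b) :
    (∫ t in a..b, M t) *ᵥ z = ∫ t in a..b, (M t) *ᵥ z := by
  let l : Matrix (Fin n) (Fin q) ℝ →ₗ[ℝ] (Fin n → ℝ) :=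
    { toFun := fun N => N *ᵥ z
      map_add' := fun N N' => Matrix.add_mulVec N N' z
      map_smul' := fun c N => by simp [Matrix.smul_mulVec] }
  have := (LinearMap.toContinuousLinearMap l).intervalIntegral_comp_comm hM
  exact this.symm

/-- Transposition commutes with interval integrals of integrable matrix-valued functions. -/
lemma transpose_intervalIntegral {n q : ℕ}
    {M : ℝ → Matrix (Fin n) (Fin q) ℝ} {a b : ℝ}
    (hM : @IntervalIntegrable _ PseudoMetricSpace.toUniformSpace.toTopologicalSpace _ M volume a b) :
    (∫ t in a..b, M t)ᵀ = ∫ t in a..b, (M t)ᵀ := by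
  let l : Matrix (Fin n) (Fin q) ℝ →ₗ[ℝ] Matrix (Fin q) (Fin n) ℝ :=
    { toFun := fun N => Nᵀ
      map_add' := fun N N' => Matrix.transpose_add N N'
      map_smul' := fun c N => Matrix.transpose_smul c N }
  have := (LinearMap.toContinuousLinearMap l).intervalIntegral_comp_comm hM
  exact this.symm

/-- A continuous nonnegative function with vanishing interval integral vanishes on the
whole interval. -/
lemma vanish_of_integral_zero {f : ℝ → ℝ} {a b : ℝ} (hab : a < b)
    (hf : Continuous f) (hnn : ∀ t, 0 ≤ f t)
    (hz : ∫ t in a..b, f t = 0) : ∀ t ∈ Set.Icc a b, f t = 0 := by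
  intro t₀ ht₀
  by_contra hne
  have hpos : 0 < f t₀ := lt_of_le_of_ne (hnn t₀) (Ne.symm hne)
  have hint : IntegrableOn f (Set.Ioc a b) volume :=
    (hf.intervalIntegrable a b).1
  have hz' : ∫ t in Set.Ioc a b, f t = 0 := by
    rwa [intervalIntegral.integral_of_le hab.le] at hz
  have hae : f =ᵐ[volume.restrict (Set.Ioc a b)] 0 :=
    (MeasureTheory.setIntegral_eq_zero_iff_of_nonneg_ae
      (Filter.Eventually.of_forall fun t => hnn t) hint).mp hz'
  have hU : IsOpen {t : ℝ | f t₀ / 2 < f t} := isOpen_lt continuous_const hf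
  have ht₀U : t₀ ∈ {t : ℝ | f t₀ / 2 < f t} := by simp; linarith
  have hmeet : ({t : ℝ | f t₀ / 2 < f t} ∩ Set.Ioo a b).Nonempty := by
    have hcl : t₀ ∈ closure (Set.Ioo a b) := by
      rwa [closure_Ioo hab.ne]
    exact mem_closure_iff.mp hcl _ hU ht₀U
  have hsub : {t : ℝ | f t₀ / 2 < f t} ∩ Set.Ioo a b ⊆
      {t : ℝ | f t ≠ 0} ∩ Set.Ioc a b := by
    rintro t ⟨ht1, ht2⟩
    refine ⟨fun h0 => ?_, Set.Ioo_subset_Ioc_self ht2⟩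
    simp only [Set.mem_setOf_eq] at ht1
    rw [h0] at ht1
    linarith
  have hPos : 0 < volume ({t : ℝ | f t₀ / 2 < f t} ∩ Set.Ioo a b) :=
    (hU.inter isOpen_Ioo).measure_pos volume hmeet
  have h0 : volume ({t : ℝ | f t ≠ 0} ∩ Set.Ioc a b) = 0 := by
    have h := hae
    rw [Filter.EventuallyEq, ae_iff] at h
    rw [Measure.restrict_apply₀'] at h
    · simpa using h
    · exact measurableSet_Ioc.nullMeasurableSet
  exact absurd (lt_of_lt_of_le hPos (measure_mono hsub)) (by simp [h0])

lemma dotProduct_self_nonneg' {q : ℕ} (v : Fin q → ℝ) : 0 ≤ v ⬝ᵥ v :=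
  Finset.sum_nonneg fun i _ => mul_self_nonneg _

lemma quad_form_eq {n q : ℕ} (M : Matrix (Fin n) (Fin q) ℝ) (x : Fin n → ℝ) :
    x ⬝ᵥ (M * Mᵀ) *ᵥ x = (Mᵀ *ᵥ x) ⬝ᵥ (Mᵀ *ᵥ x) := by
  rw [← Matrix.mulVec_mulVec, Matrix.dotProduct_mulVec, ← Matrix.mulVec_transpose]

end Helpers

/-- Exact controllability of the deterministic delay system on `[0, T]` (surjectivity of
the control operator `L` over measurable square-integrable controls) is equivalent to
positive definiteness of the controllability Gramian `G_T`. -/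
theorem delay_controllable_iff_gramian_posDef
    {n p : ℕ} (hn : 0 < n) (hp : 0 < p)
    (A : Matrix (Fin n) (Fin n) ℝ) (B₁ B₂ : Matrix (Fin n) (Fin p) ℝ)
    (h T : ℝ) (hh : 0 < h) (hhT : h < T)
    (B : Matrix (Fin n) (Fin p) ℝ) (hB : B = B₁ + NormedSpace.exp ((-h) • A) * B₂)
    (G : Matrix (Fin n) (Fin n) ℝ)
    (hG : G = (∫ t in (0:ℝ)..(T - h),
          NormedSpace.exp ((T - t) • A) * B * Bᵀ * NormedSpace.exp ((T - t) • Aᵀ))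
        + ∫ t in (T - h)..T,
          NormedSpace.exp ((T - t) • A) * B₁ * B₁ᵀ * NormedSpace.exp ((T - t) • Aᵀ))
    (L : (ℝ → Fin p → ℝ) → (Fin n → ℝ))
    (hL : ∀ u : ℝ → Fin p → ℝ,
      L u = (∫ t in (0:ℝ)..(T - h), (NormedSpace.exp ((T - t) • A) * B).mulVec (u t))
        + ∫ t in (T - h)..T, (NormedSpace.exp ((T - t) • A) * B₁).mulVec (u t)) :
    (∀ y : Fin n → ℝ, ∃ u : ℝ → Fin p → ℝ, Measurable u ∧
        IntegrableOn (fun t => ‖u t‖ ^ 2) (Set.Icc (0:ℝ) T) volume ∧ L u = y)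
      ↔ G.PosDef := by
  classical
  have hT0 : (0:ℝ) ≤ T - h := by linarith
  have hT0' : (0:ℝ) < T - h := by linarith
  have hThT : T - h ≤ T := by linarith
  have hEcont : Continuous fun t : ℝ => NormedSpace.exp ((T - t) • A) := by
    letI := Matrix.linftyOpNormedRing (n := Fin n) (α := ℝ)
    letI := Matrix.linftyOpNormedAlgebra (n := Fin n) (R := ℝ) (α := ℝ)
    letI : NormedAlgebra ℚ (Matrix (Fin n) (Fin n) ℝ) := NormedAlgebra.restrictScalars ℚ ℝ _
    exact NormedSpace.exp_continuous.comp (by fun_prop)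
  set E : ℝ → Matrix (Fin n) (Fin n) ℝ := fun t => NormedSpace.exp ((T - t) • A) with hEdef
  have hTrans : ∀ t : ℝ, NormedSpace.exp ((T - t) • Aᵀ) = (E t)ᵀ := by
    intro t
    show _ = (NormedSpace.exp ((T - t) • A))ᵀ
    rw [← Matrix.exp_transpose, Matrix.transpose_smul]
  set M₁ : ℝ → Matrix (Fin n) (Fin p) ℝ := fun t => E t * B with hM₁
  set M₂ : ℝ → Matrix (Fin n) (Fin p) ℝ := fun t => E t * B₁ with hM₂
  have hG' : G = (∫ t in (0:ℝ)..(T - h), M₁ t * (M₁ t)ᵀ)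
      + ∫ t in (T - h)..T, M₂ t * (M₂ t)ᵀ := by
    rw [hG]
    congr 1
    · refine intervalIntegral.integral_congr fun t _ => ?_
      rw [hTrans t]
      simp only [hM₁]
      rw [Matrix.transpose_mul, Matrix.mul_assoc]
    · refine intervalIntegral.integral_congr fun t _ => ?_
      rw [hTrans t]
      simp only [hM₂]
      rw [Matrix.transpose_mul, Matrix.mul_assoc]
  have hL' : ∀ u : ℝ → Fin p → ℝ,
      L u = (∫ t in (0:ℝ)..(T - h), (M₁ t) *ᵥ u t) + ∫ t in (T - h)..T, (M₂ t) *ᵥ u t := by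
    intro u
    rw [hL u]
  have hM₁c : Continuous M₁ := by
    rw [hM₁]; exact hEcont.matrix_mul continuous_const
  have hM₂c : Continuous M₂ := by
    rw [hM₂]; exact hEcont.matrix_mul continuous_const
  have hq₁c : Continuous fun t => M₁ t * (M₁ t)ᵀ := hM₁c.matrix_mul hM₁c.matrix_transpose
  have hq₂c : Continuous fun t => M₂ t * (M₂ t)ᵀ := hM₂c.matrix_mul hM₂c.matrix_transpose
  have hI₁ : @IntervalIntegrable _ PseudoMetricSpace.toUniformSpace.toTopologicalSpace _ (fun t => M₁ t * (M₁ t)ᵀ) volume 0 (T - h) :=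
    hq₁c.intervalIntegrable _ _
  have hI₂ : @IntervalIntegrable _ PseudoMetricSpace.toUniformSpace.toTopologicalSpace _ (fun t => M₂ t * (M₂ t)ᵀ) volume (T - h) T :=
    hq₂c.intervalIntegrable _ _
  have key : ∀ x : Fin n → ℝ, x ⬝ᵥ G *ᵥ x
      = (∫ t in (0:ℝ)..(T - h), ((M₁ t)ᵀ *ᵥ x) ⬝ᵥ ((M₁ t)ᵀ *ᵥ x))
      + ∫ t in (T - h)..T, ((M₂ t)ᵀ *ᵥ x) ⬝ᵥ ((M₂ t)ᵀ *ᵥ x) := by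
    intro x
    rw [hG', Matrix.add_mulVec, dotProduct_add]
    congr 1
    · rw [mulVec_intervalIntegral x hI₁,
        dot_intervalIntegral x ((hq₁c.matrix_mulVec continuous_const).intervalIntegrable _ _)]
      exact intervalIntegral.integral_congr fun t _ => quad_form_eq (M₁ t) x
    · rw [mulVec_intervalIntegral x hI₂,
        dot_intervalIntegral x ((hq₂c.matrix_mulVec continuous_const).intervalIntegrable _ _)]
      exact intervalIntegral.integral_congr fun t _ => quad_form_eq (M₂ t) x
  constructor
  · -- controllability implies positive definiteness
    intro hsurj
    refine posDef_iff_dotProduct_mulVec.mpr ⟨?_, ?_⟩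
    · show Gᴴ = G
      rw [Matrix.conjTranspose_eq_transpose_of_trivial, hG', Matrix.transpose_add,
        transpose_intervalIntegral hI₁, transpose_intervalIntegral hI₂]
      congr 1
      · exact intervalIntegral.integral_congr fun t _ => by
          rw [Matrix.transpose_mul, Matrix.transpose_transpose]
      · exact intervalIntegral.integral_congr fun t _ => by
          rw [Matrix.transpose_mul, Matrix.transpose_transpose]
    · intro x hx
      show (0:ℝ) < star x ⬝ᵥ G *ᵥ x
      have hsx : star x = x := rfl
      rw [hsx, key x]
      have h1nn : 0 ≤ ∫ t in (0:ℝ)..(T - h), ((M₁ t)ᵀ *ᵥ x) ⬝ᵥ ((M₁ t)ᵀ *ᵥ x) :=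
        intervalIntegral.integral_nonneg hT0 fun t _ => dotProduct_self_nonneg' _
      have h2nn : 0 ≤ ∫ t in (T - h)..T, ((M₂ t)ᵀ *ᵥ x) ⬝ᵥ ((M₂ t)ᵀ *ᵥ x) :=
        intervalIntegral.integral_nonneg hThT fun t _ => dotProduct_self_nonneg' _
      by_contra hle
      push_neg at hle
      have hI₁0 : ∫ t in (0:ℝ)..(T - h), ((M₁ t)ᵀ *ᵥ x) ⬝ᵥ ((M₁ t)ᵀ *ᵥ x) = 0 :=
        le_antisymm (by linarith) h1nn
      have hI₂0 : ∫ t in (T - h)..T, ((M₂ t)ᵀ *ᵥ x) ⬝ᵥ ((M₂ t)ᵀ *ᵥ x) = 0 :=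
        le_antisymm (by linarith) h2nn
      have hg₁c : Continuous fun t => ((M₁ t)ᵀ *ᵥ x) ⬝ᵥ ((M₁ t)ᵀ *ᵥ x) :=
        (hM₁c.matrix_transpose.matrix_mulVec continuous_const).dotProduct
          (hM₁c.matrix_transpose.matrix_mulVec continuous_const)
      have hg₂c : Continuous fun t => ((M₂ t)ᵀ *ᵥ x) ⬝ᵥ ((M₂ t)ᵀ *ᵥ x) :=
        (hM₂c.matrix_transpose.matrix_mulVec continuous_const).dotProduct
          (hM₂c.matrix_transpose.matrix_mulVec continuous_const)
      have hv₁ : ∀ t ∈ Set.Icc (0:ℝ) (T - h), (M₁ t)ᵀ *ᵥ x = 0 := by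
        intro t ht
        have := vanish_of_integral_zero hT0' hg₁c (fun t => dotProduct_self_nonneg' _) hI₁0 t ht
        exact dotProduct_self_eq_zero.mp this
      have hv₂ : ∀ t ∈ Set.Icc (T - h) T, (M₂ t)ᵀ *ᵥ x = 0 := by
        intro t ht
        have := vanish_of_integral_zero (by linarith : T - h < T) hg₂c
          (fun t => dotProduct_self_nonneg' _) hI₂0 t ht
        exact dotProduct_self_eq_zero.mp this
      obtain ⟨u, -, -, huL⟩ := hsurj x
      have hxx : x ⬝ᵥ x = 0 := by
        have hcong := congrArg (fun v => x ⬝ᵥ v) huL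
        rw [hL' u, dotProduct_add] at hcong
        have hz1 : x ⬝ᵥ (∫ t in (0:ℝ)..(T - h), (M₁ t) *ᵥ u t) = 0 := by
          by_cases hi : IntervalIntegrable (fun t => (M₁ t) *ᵥ u t) volume 0 (T - h)
          · rw [dot_intervalIntegral x hi]
            rw [intervalIntegral.integral_congr (g := fun _ => (0:ℝ)) fun t ht => ?_]
            · simp
            · rw [Set.uIcc_of_le hT0] at ht
              rw [Matrix.dotProduct_mulVec, ← Matrix.mulVec_transpose, hv₁ t ht,
                zero_dotProduct]
          · rw [intervalIntegral.integral_undef hi, dotProduct_zero]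
        have hz2 : x ⬝ᵥ (∫ t in (T - h)..T, (M₂ t) *ᵥ u t) = 0 := by
          by_cases hi : IntervalIntegrable (fun t => (M₂ t) *ᵥ u t) volume (T - h) T
          · rw [dot_intervalIntegral x hi]
            rw [intervalIntegral.integral_congr (g := fun _ => (0:ℝ)) fun t ht => ?_]
            · simp
            · rw [Set.uIcc_of_le hThT] at ht
              rw [Matrix.dotProduct_mulVec, ← Matrix.mulVec_transpose, hv₂ t ht,
                zero_dotProduct]
          · rw [intervalIntegral.integral_undef hi, dotProduct_zero]
        rw [hz1, hz2] at hcong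
        linarith [hcong.symm]
      exact hx (dotProduct_self_eq_zero.mp hxx)
  · -- positive definiteness implies controllability
    intro hGpd y
    have hdet : IsUnit G.det := hGpd.det_pos.ne'.isUnit
    set z : Fin n → ℝ := G⁻¹ *ᵥ y with hz
    have hc₁ : Continuous fun t => (M₁ t)ᵀ *ᵥ z :=
      hM₁c.matrix_transpose.matrix_mulVec continuous_const
    have hc₂ : Continuous fun t => (M₂ t)ᵀ *ᵥ z :=
      hM₂c.matrix_transpose.matrix_mulVec continuous_const
    refine ⟨fun t => if t ≤ T - h then (M₁ t)ᵀ *ᵥ z else (M₂ t)ᵀ *ᵥ z, ?_, ?_, ?_⟩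
    · exact Measurable.ite (measurableSet_le measurable_id measurable_const)
        hc₁.measurable hc₂.measurable
    · have hgc : Continuous fun t => ‖(M₁ t)ᵀ *ᵥ z‖ ^ 2 + ‖(M₂ t)ᵀ *ᵥ z‖ ^ 2 :=
        ((hc₁.norm.pow 2).add (hc₂.norm.pow 2))
      refine MeasureTheory.Integrable.mono' (hgc.integrableOn_Icc) ?_ ?_
      · refine (Measurable.pow_const ?_ 2).aestronglyMeasurable
        exact (Measurable.ite (measurableSet_le measurable_id measurable_const)
          hc₁.measurable hc₂.measurable).norm
      · refine Filter.Eventually.of_forall fun t => ?_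
        rw [Real.norm_eq_abs, abs_of_nonneg (by positivity)]
        by_cases hts : t ≤ T - h
        · simp only [if_pos hts]
          nlinarith [norm_nonneg ((M₂ t)ᵀ *ᵥ z), norm_nonneg ((M₁ t)ᵀ *ᵥ z)]
        · simp only [if_neg hts]
          nlinarith [norm_nonneg ((M₂ t)ᵀ *ᵥ z), norm_nonneg ((M₁ t)ᵀ *ᵥ z)]
    · rw [hL']
      have he₁ : (∫ t in (0:ℝ)..(T - h),
          (M₁ t) *ᵥ (if t ≤ T - h then (M₁ t)ᵀ *ᵥ z else (M₂ t)ᵀ *ᵥ z))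
          = ∫ t in (0:ℝ)..(T - h), (M₁ t * (M₁ t)ᵀ) *ᵥ z := by
        refine intervalIntegral.integral_congr fun t ht => ?_
        rw [Set.uIcc_of_le hT0] at ht
        rw [if_pos ht.2, Matrix.mulVec_mulVec]
      have he₂ : (∫ t in (T - h)..T,
          (M₂ t) *ᵥ (if t ≤ T - h then (M₁ t)ᵀ *ᵥ z else (M₂ t)ᵀ *ᵥ z))
          = ∫ t in (T - h)..T, (M₂ t * (M₂ t)ᵀ) *ᵥ z := by
        refine intervalIntegral.integral_congr_ae (Filter.Eventually.of_forall fun t ht => ?_)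
        rw [Set.uIoc_of_le hThT] at ht
        rw [if_neg (not_le.mpr ht.1), Matrix.mulVec_mulVec]
      rw [he₁, he₂, ← mulVec_intervalIntegral z hI₁, ← mulVec_intervalIntegral z hI₂,
        ← Matrix.add_mulVec, ← hG', hz, Matrix.mulVec_mulVec,
        Matrix.mul_nonsing_inv _ hdet, Matrix.one_mulVec]
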